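/- Let α₁, α₂, α₃ be 2-forms on a finite-dimensional real inner product space, with associated skew-symmetric endomorphisms A₁, A₂, A₃. Then L*_{α₁}(α₂ ∧ α₃) = ⟨α₁,α₂⟩α₃ + ⟨α₁,α₃⟩α₂ + g((A₃A₁A₂ + A₂A₁A₃)·,·), where L*_{α₁} is the adjoint of exterior multiplication by α₁. -/
import Mathlib


/-!
STATEMENT 12: for 2-forms `α₁, α₂, α₃` on a finite-dimensional real inner product space,
with associated skew-symmetric endomorphisms `A₁, A₂, A₃` (`αᵢ = g(Aᵢ·,·)`),
`L*_{α₁}(α₂ ∧ α₃) = ⟨α₁,α₂⟩α₃ + ⟨α₁,α₃⟩α₂ + g((A₃A₁A₂ + A₂A₁A₃)·,·)`.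
-/

noncomputable section
open scoped BigOperators RealInnerProductSpace

variable {V : Type*} [NormedAddCommGroup V] [InnerProductSpace ℝ V]

/-- Wedge product of alternating maps. -/
def wedgeAM {p q : ℕ} (α : AlternatingMap ℝ V ℝ (Fin p)) (β : AlternatingMap ℝ V ℝ (Fin q)) :
    AlternatingMap ℝ V ℝ (Fin (p + q)) :=
  AlternatingMap.domDomCongr finSumFinEquiv
    ((TensorProduct.lid ℝ ℝ).toLinearMap.compAlternatingMap (α.domCoprod β))

/-- `L*_{α₁}φ = ½ Σ_{i,j} α₁(eᵢ,eⱼ) eⱼ⌟eᵢ⌟φ`. -/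
def Lstar2 {N m : ℕ} (b : OrthonormalBasis (Fin N) ℝ V)
    (α₁ : AlternatingMap ℝ V ℝ (Fin 2)) (φ : AlternatingMap ℝ V ℝ (Fin (m + 2))) :
    AlternatingMap ℝ V ℝ (Fin m) :=
  (2 : ℝ)⁻¹ • ∑ i, ∑ j, α₁ ![b i, b j] • ((φ.curryLeft (b i)).curryLeft (b j))

/-- Inner product on 2-forms: `⟨α,β⟩ = ½ Σ_{i,j} α(eᵢ,eⱼ)β(eᵢ,eⱼ)`. -/
def inner2 {N : ℕ} (b : OrthonormalBasis (Fin N) ℝ V)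
    (α β : AlternatingMap ℝ V ℝ (Fin 2)) : ℝ :=
  (2 : ℝ)⁻¹ * ∑ i, ∑ j, α ![b i, b j] * β ![b i, b j]


omit [NormedAddCommGroup V] [InnerProductSpace ℝ V] in
private lemma Lstar2_aux_eta2 {W : Type*} (g : Fin 2 → W) : g = ![g 0, g 1] := by
  funext i; fin_cases i <;> rfl

private lemma Lstar2_aux_alt_swap2 (α : AlternatingMap ℝ V ℝ (Fin 2)) (a b : V) :
    α ![b, a] = - α ![a, b] := by
  have h := α.map_swap (v := ![a, b]) (i := (0 : Fin 2)) (j := 1) (by decide)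
  have : (![a, b] ∘ Equiv.swap (0 : Fin 2) 1) = ![b, a] := by
    funext i; fin_cases i <;> simp [Equiv.swap_apply_def]
  rwa [this] at h

private lemma Lstar2_aux_sum_perm4 (f : Equiv.Perm (Fin 4) → ℝ) :
    ∑ σ, f σ = ∑ p : Fin 4, ∑ q : Fin 3, ∑ r : Fin 2,
      f (Equiv.Perm.decomposeFin.symm (p, Equiv.Perm.decomposeFin.symm (q,
          Equiv.Perm.decomposeFin.symm (r, 1)))) := by
  rw [Finset.univ_perm_fin_succ, Finset.sum_map, Fintype.sum_prod_type]
  refine Finset.sum_congr rfl fun p _ => ?_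
  rw [Finset.univ_perm_fin_succ, Finset.sum_map, Fintype.sum_prod_type]
  refine Finset.sum_congr rfl fun q _ => ?_
  rw [Finset.univ_perm_fin_succ, Finset.sum_map, Fintype.sum_prod_type]
  refine Finset.sum_congr rfl fun r _ => ?_
  rw [Fintype.sum_unique]
  have hd : (default : Equiv.Perm (Fin 1)) = 1 := Subsingleton.elim _ _
  rw [Equiv.toEmbedding_apply, Equiv.toEmbedding_apply, Equiv.toEmbedding_apply, hd]

private lemma Lstar2_aux_lid_domCoprod (α β : AlternatingMap ℝ V ℝ (Fin 2))
    (w : Fin 2 ⊕ Fin 2 → V) :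
    (4:ℝ) * ((TensorProduct.lid ℝ ℝ) ((α.domCoprod β) w))
      = ∑ σ : Equiv.Perm (Fin 2 ⊕ Fin 2),
          ((Equiv.Perm.sign σ : ℤ) : ℝ) * (α (fun i => w (σ (Sum.inl i))) * β (fun i => w (σ (Sum.inr i)))) := by
  have h := MultilinearMap.domCoprod_alternization_eq (R' := ℝ) (Mᵢ := V) (N₁ := ℝ) (N₂ := ℝ) α β
  have h2 := congrArg (fun f => (TensorProduct.lid ℝ ℝ).toLinearMap (f w)) h
  simp only [MultilinearMap.alternatization_apply, MultilinearMap.smul_apply,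
    MultilinearMap.domDomCongr_apply, MultilinearMap.domCoprod_apply, map_sum,
    Units.smul_def, map_zsmul, AlternatingMap.smul_apply, map_nsmul, LinearEquiv.coe_coe,
    TensorProduct.lid_tmul, smul_eq_mul, Fintype.card_fin] at h2
  simp only [zsmul_eq_mul, AlternatingMap.coe_multilinearMap] at h2
  rw [h2]
  generalize ((TensorProduct.lid ℝ ℝ) ((α.domCoprod β) w) : ℝ) = r
  rw [nsmul_eq_mul]
  norm_num [Nat.factorial]

private lemma Lstar2_aux_wedge4 (α β : AlternatingMap ℝ V ℝ (Fin 2)) (a b c d : V)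
    (x : Fin 4 → V) (hx : x = ![a,b,c,d]) :
    wedgeAM α β x =
      α ![a, b] * β ![c, d] - α ![a, c] * β ![b, d]
        + α ![a, d] * β ![b, c] + α ![b, c] * β ![a, d]
        - α ![b, d] * β ![a, c] + α ![c, d] * β ![a, b] := by
  have hw : (4:ℝ) * wedgeAM α β x
      = ∑ σ : Equiv.Perm (Fin 2 ⊕ Fin 2), ((Equiv.Perm.sign σ : ℤ):ℝ) *
          (α (fun i => x (finSumFinEquiv (σ (Sum.inl i))))
            * β (fun i => x (finSumFinEquiv (σ (Sum.inr i))))) :=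
    Lstar2_aux_lid_domCoprod α β (fun s => x (finSumFinEquiv s))
  have hcompat : ∀ σ : Equiv.Perm (Fin 2 ⊕ Fin 2),
      ((Equiv.Perm.sign σ : ℤ):ℝ) *
          (α (fun i => x (finSumFinEquiv (σ (Sum.inl i))))
            * β (fun i => x (finSumFinEquiv (σ (Sum.inr i)))))
        = (fun τ : Equiv.Perm (Fin 4) =>
            ((Equiv.Perm.sign τ : ℤ):ℝ) * (α ![x (τ 0), x (τ 1)] * β ![x (τ 2), x (τ 3)]))
            ((Equiv.permCongr (finSumFinEquiv : Fin 2 ⊕ Fin 2 ≃ Fin 4)) σ) := by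
    intro σ
    have e0 : (finSumFinEquiv : Fin 2 ⊕ Fin 2 ≃ Fin 4).symm (0 : Fin 4) = Sum.inl 0 := by decide
    have e1 : (finSumFinEquiv : Fin 2 ⊕ Fin 2 ≃ Fin 4).symm (1 : Fin 4) = Sum.inl 1 := by decide
    have e2 : (finSumFinEquiv : Fin 2 ⊕ Fin 2 ≃ Fin 4).symm (2 : Fin 4) = Sum.inr 0 := by decide
    have e3 : (finSumFinEquiv : Fin 2 ⊕ Fin 2 ≃ Fin 4).symm (3 : Fin 4) = Sum.inr 1 := by decide
    simp only [Equiv.Perm.sign_permCongr]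
    congr 2
    · rw [Lstar2_aux_eta2 (fun i => x (finSumFinEquiv (σ (Sum.inl i))))]
      simp [Equiv.permCongr_apply, e0, e1]
    · rw [Lstar2_aux_eta2 (fun i => x (finSumFinEquiv (σ (Sum.inr i))))]
      simp [Equiv.permCongr_apply, e2, e3]
  rw [Fintype.sum_equiv (Equiv.permCongr (finSumFinEquiv : Fin 2 ⊕ Fin 2 ≃ Fin 4)) _
    (fun τ : Equiv.Perm (Fin 4) =>
      ((Equiv.Perm.sign τ : ℤ):ℝ) * (α ![x (τ 0), x (τ 1)] * β ![x (τ 2), x (τ 3)])) hcompat] at hw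
  rw [Lstar2_aux_sum_perm4] at hw
  have f2 : (2:Fin 4) = Fin.succ 1 := rfl
  have f3 : (3:Fin 4) = Fin.succ 2 := rfl
  have g1 : (1:Fin 3) = Fin.succ 0 := rfl
  have g2 : (2:Fin 3) = Fin.succ 1 := rfl
  have k1 : (1:Fin 2) = Fin.succ 0 := rfl
  simp only [Fin.sum_univ_four, Fin.sum_univ_three, Fin.sum_univ_two,
    Equiv.Perm.decomposeFin.symm_sign, Equiv.Perm.decomposeFin_symm_apply_zero,
    Equiv.Perm.decomposeFin_symm_apply_one, f2, f3, g1, g2, k1,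
    Equiv.Perm.decomposeFin_symm_apply_succ, Equiv.Perm.one_apply,
    Equiv.swap_apply_def] at hw
  have s10 : Fin.succ (0:Fin 1) = 1 := rfl
  have s20 : Fin.succ (0:Fin 2) = 1 := rfl
  have s21 : Fin.succ (1:Fin 2) = 2 := rfl
  have s30 : Fin.succ (0:Fin 3) = 1 := rfl
  have s31 : Fin.succ (1:Fin 3) = 2 := rfl
  have s32 : Fin.succ (2:Fin 3) = 3 := rfl
  subst hx
  simp (config := { decide := true }) only [s10, s20, s21, s30, s31, s32,
    Matrix.cons_val_zero, Matrix.cons_val_one, Matrix.head_cons,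
    Matrix.cons_val_succ, Matrix.cons_val_two, Matrix.cons_val_three, Matrix.tail_cons] at hw
  norm_num [Matrix.cons_val_zero, Matrix.cons_val_one, Matrix.head_cons,
    Matrix.cons_val_succ, Matrix.cons_val_two, Matrix.cons_val_three, Matrix.tail_cons] at hw ⊢
  simp only [Lstar2_aux_alt_swap2 α a b, Lstar2_aux_alt_swap2 α a c, Lstar2_aux_alt_swap2 α a d,
    Lstar2_aux_alt_swap2 α b c, Lstar2_aux_alt_swap2 α b d, Lstar2_aux_alt_swap2 α c d,
    Lstar2_aux_alt_swap2 β a b, Lstar2_aux_alt_swap2 β a c, Lstar2_aux_alt_swap2 β a d,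
    Lstar2_aux_alt_swap2 β b c, Lstar2_aux_alt_swap2 β b d, Lstar2_aux_alt_swap2 β c d] at hw
  linear_combination hw / 4

private lemma Lstar2_aux_sum_apply {m : ℕ} {ι' : Type*} (s : Finset ι')
    (f : ι' → AlternatingMap ℝ V ℝ (Fin m)) (x : Fin m → V) :
    (∑ i ∈ s, f i) x = ∑ i ∈ s, f i x := by
  induction s using Finset.cons_induction with
  | empty => simp
  | cons a s ha ih => simp [Finset.sum_cons, ih]

private lemma Lstar2_aux_Lkey {N : ℕ} (b : OrthonormalBasis (Fin N) ℝ V) (A B C : V →ₗ[ℝ] V)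
    (hA : ∀ u v : V, ⟪A u, v⟫ = -⟪u, A v⟫)
    (hB : ∀ u v : V, ⟪B u, v⟫ = -⟪u, B v⟫)
    (hC : ∀ u v : V, ⟪C u, v⟫ = -⟪u, C v⟫) (x y : V) :
    ∑ i, ∑ j, ⟪A (b i), b j⟫ * (⟪B (b i), x⟫ * ⟪C (b j), y⟫)
      = -⟪C (A (B x)), y⟫ := by
  have inner_step : ∀ i, ∑ j, ⟪A (b i), b j⟫ * (⟪B (b i), x⟫ * ⟪C (b j), y⟫)
      = -(⟪B (b i), x⟫ * ⟪A (b i), C y⟫) := by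
    intro i
    calc ∑ j, ⟪A (b i), b j⟫ * (⟪B (b i), x⟫ * ⟪C (b j), y⟫)
        = ∑ j, -(⟪B (b i), x⟫ * (⟪A (b i), b j⟫ * ⟪b j, C y⟫)) :=
          Finset.sum_congr rfl (fun j _ => by rw [hC (b j) y]; ring)
      _ = -(⟪B (b i), x⟫ * ∑ j, ⟪A (b i), b j⟫ * ⟪b j, C y⟫) := by
          rw [Finset.sum_neg_distrib, ← Finset.mul_sum]
      _ = -(⟪B (b i), x⟫ * ⟪A (b i), C y⟫) := by rw [b.sum_inner_mul_inner]
  calc ∑ i, ∑ j, ⟪A (b i), b j⟫ * (⟪B (b i), x⟫ * ⟪C (b j), y⟫)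
      = ∑ i, -(⟪B (b i), x⟫ * ⟪A (b i), C y⟫) :=
        Finset.sum_congr rfl fun i _ => inner_step i
    _ = ∑ i, -(⟪B x, b i⟫ * ⟪b i, A (C y)⟫) := Finset.sum_congr rfl fun i _ => by
        rw [hB (b i) x, hA (b i) (C y), real_inner_comm (b i) (B x)]; ring
    _ = -⟪B x, A (C y)⟫ := by rw [Finset.sum_neg_distrib, b.sum_inner_mul_inner]
    _ = ⟪A (B x), C y⟫ := by rw [hA (B x) (C y)]
    _ = -⟪C (A (B x)), y⟫ := by rw [hC (A (B x)) y, neg_neg]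

private lemma Lstar2_aux_skew_flip (P Q R : V →ₗ[ℝ] V)
    (hP : ∀ u v : V, ⟪P u, v⟫ = -⟪u, P v⟫)
    (hQ : ∀ u v : V, ⟪Q u, v⟫ = -⟪u, Q v⟫)
    (hR : ∀ u v : V, ⟪R u, v⟫ = -⟪u, R v⟫) (x y : V) :
    ⟪P (Q (R x)), y⟫ = -⟪R (Q (P y)), x⟫ := by
  rw [hP (Q (R x)) y, hQ (R x) (P y), hR x (Q (P y)), real_inner_comm x (R (Q (P y))), neg_neg]

theorem Lstar2_wedge {N : ℕ} [FiniteDimensional ℝ V]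
    (b : OrthonormalBasis (Fin N) ℝ V)
    (α₁ α₂ α₃ : AlternatingMap ℝ V ℝ (Fin 2))
    (A₁ A₂ A₃ : V →ₗ[ℝ] V)
    (h₁ : ∀ u v : V, α₁ ![u, v] = ⟪A₁ u, v⟫)
    (h₂ : ∀ u v : V, α₂ ![u, v] = ⟪A₂ u, v⟫)
    (h₃ : ∀ u v : V, α₃ ![u, v] = ⟪A₃ u, v⟫)
    (hs₁ : ∀ u v : V, ⟪A₁ u, v⟫ = -⟪u, A₁ v⟫)
    (hs₂ : ∀ u v : V, ⟪A₂ u, v⟫ = -⟪u, A₂ v⟫)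
    (hs₃ : ∀ u v : V, ⟪A₃ u, v⟫ = -⟪u, A₃ v⟫) :
    ∀ u v : V,
      Lstar2 b α₁ (wedgeAM α₂ α₃) ![u, v]
        = inner2 b α₁ α₂ * α₃ ![u, v] + inner2 b α₁ α₃ * α₂ ![u, v]
          + ⟪A₃ (A₁ (A₂ u)) + A₂ (A₁ (A₃ u)), v⟫  := by
  intro u v
  have hL : Lstar2 b α₁ (wedgeAM α₂ α₃) ![u, v]
      = 2⁻¹ * ∑ i, ∑ j, α₁ ![b i, b j] * (wedgeAM α₂ α₃) ![b i, b j, u, v] := by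
    simp only [Lstar2, AlternatingMap.smul_apply, Lstar2_aux_sum_apply,
      AlternatingMap.curryLeft_apply_apply, smul_eq_mul]
  rw [hL]
  have hexp : ∀ i j : Fin N, α₁ ![b i, b j] * (wedgeAM α₂ α₃) ![b i, b j, u, v]
      = α₁ ![b i, b j] * α₂ ![b i, b j] * α₃ ![u, v]
        + (α₁ ![b i, b j] * α₃ ![b i, b j] * α₂ ![u, v]
          + (-(⟪A₁ (b i), b j⟫ * (⟪A₂ (b i), u⟫ * ⟪A₃ (b j), v⟫))
            + (⟪A₁ (b i), b j⟫ * (⟪A₂ (b i), v⟫ * ⟪A₃ (b j), u⟫)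
              + (⟪A₁ (b i), b j⟫ * (⟪A₃ (b i), v⟫ * ⟪A₂ (b j), u⟫)
                + -(⟪A₁ (b i), b j⟫ * (⟪A₃ (b i), u⟫ * ⟪A₂ (b j), v⟫)))))) := by
    intro i j
    rw [Lstar2_aux_wedge4 α₂ α₃ (b i) (b j) u v ![b i, b j, u, v] rfl]
    simp only [h₁, h₂, h₃]
    ring
  rw [Finset.sum_congr rfl fun i _ => Finset.sum_congr rfl fun j _ => hexp i j]
  simp only [Finset.sum_add_distrib, Finset.sum_neg_distrib]
  rw [Lstar2_aux_Lkey b A₁ A₂ A₃ hs₁ hs₂ hs₃ u v, Lstar2_aux_Lkey b A₁ A₂ A₃ hs₁ hs₂ hs₃ v u,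
    Lstar2_aux_Lkey b A₁ A₃ A₂ hs₁ hs₃ hs₂ v u, Lstar2_aux_Lkey b A₁ A₃ A₂ hs₁ hs₃ hs₂ u v]
  have p2 : ∀ (γ δ : AlternatingMap ℝ V ℝ (Fin 2)) (r : ℝ),
      (∑ i, ∑ j, γ ![b i, b j] * δ ![b i, b j] * r)
        = (∑ i, ∑ j, γ ![b i, b j] * δ ![b i, b j]) * r := by
    intro γ δ r
    rw [Finset.sum_mul]
    exact Finset.sum_congr rfl fun i _ => by rw [Finset.sum_mul]
  rw [p2 α₁ α₂ (α₃ ![u, v]), p2 α₁ α₃ (α₂ ![u, v])]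
  rw [Lstar2_aux_skew_flip A₃ A₁ A₂ hs₃ hs₁ hs₂ v u,
    Lstar2_aux_skew_flip A₂ A₁ A₃ hs₂ hs₁ hs₃ v u]
  simp only [inner2, inner_add_left]
  ring
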